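/- For all real α, β ≠ 0, r, x ≠ 0, all λ ∈ ℕ with λ ≥ 1, all m ≥ 0, and all n ≥ 0: (-1)^m · A^{λ,x}_{n+m}(α,β,r) = Σ_{k=0}^{m} S(m,k;α,-β,-r) · C(k+λ-1,k) · k! · (-βx)^k · A^{λ+k,x}_n(α,β,r+mα+kβ). -/

import Mathlib

open Finset

/-- Generalized factorial polynomial `(t|α)_n = ∏_{j=0}^{n-1} (t - jα)`. -/
noncomputable def gfact (t α : ℝ) (n : ℕ) : ℝ := ∏ j ∈ Finset.range n, (t - j * α)

/-- Hsu–Shiue generalized Stirling numbers (explicit formula, β ≠ 0). -/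
noncomputable def HS (n k : ℕ) (α β γ : ℝ) : ℝ :=
  (1 / (β ^ k * (Nat.factorial k : ℝ))) *
    ∑ s ∈ Finset.range (k + 1), (-1 : ℝ) ^ (k - s) * (Nat.choose k s : ℝ) * gfact (β * s + γ) α n

/-- Second-type higher order generalized geometric polynomials. -/
noncomputable def A (lam : ℕ) (x : ℝ) (n : ℕ) (α β γ : ℝ) : ℝ :=
  ∑ k ∈ Finset.range (n + 1),
    (Nat.choose (k + lam - 1) k : ℝ) * (-1 : ℝ) ^ (n + k) * β ^ k * (Nat.factorial k : ℝ) *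
      HS n k α (-β) (-γ) * x ^ k

open fwdDiff

lemma fd_eval (f : ℕ → ℝ) (k y : ℕ) :
    (fwdDiff 1)^[k] f y = ∑ s ∈ range (k+1), (-1:ℝ)^(k-s) * (Nat.choose k s) * f (y + s) := by
  rw [fwdDiff_iter_eq_sum_shift]
  refine Finset.sum_congr rfl fun s _ => ?_
  simp only [smul_eq_mul, mul_one, zsmul_eq_mul]
  push_cast
  ring

lemma fd_shift (f : ℕ → ℝ) (i k y : ℕ) :
    (fwdDiff 1)^[i] (fun s => f (s + k)) y = (fwdDiff 1)^[i] f (y + k) := by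
  rw [fd_eval, fd_eval]
  refine Finset.sum_congr rfl fun s _ => ?_
  congr 2
  omega

lemma fd_mul (f g : ℕ → ℝ) (K y : ℕ) :
    (fwdDiff 1)^[K] (fun s => f s * g s) y
      = ∑ k ∈ range (K+1), (Nat.choose K k : ℝ) * (fwdDiff 1)^[k] f y *
          (fwdDiff 1)^[K-k] g (y+k) := by
  induction K generalizing f g y with
  | zero => simp
  | succ K IH =>
    have hsplit : fwdDiff 1 (fun s => f s * g s)
        = fun s => f s * fwdDiff 1 g s + fwdDiff 1 f s * g (s+1) := by
      funext s
      simp only [fwdDiff]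
      ring
    rw [Function.iterate_succ_apply, hsplit]
    have hadd : (fwdDiff 1)^[K] (fun s => f s * fwdDiff 1 g s + fwdDiff 1 f s * g (s+1)) y
        = (fwdDiff 1)^[K] (fun s => f s * fwdDiff 1 g s) y
          + (fwdDiff 1)^[K] (fun s => fwdDiff 1 f s * g (s+1)) y := by
      have := fwdDiff_iter_add (1:ℕ) (fun s => f s * fwdDiff 1 g s)
        (fun s => fwdDiff 1 f s * g (s+1)) K
      calc (fwdDiff 1)^[K] (fun s => f s * fwdDiff 1 g s + fwdDiff 1 f s * g (s+1)) y
          = (fwdDiff 1)^[K] ((fun s => f s * fwdDiff 1 g s)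
              + (fun s => fwdDiff 1 f s * g (s+1))) y := rfl
        _ = _ := by rw [this]; rfl
    rw [hadd, IH, IH]
    have h1 : ∀ k ∈ range (K+1),
        (Nat.choose K k : ℝ) * (fwdDiff 1)^[k] f y * (fwdDiff 1)^[K-k] (fwdDiff 1 g) (y+k)
        = (Nat.choose K k : ℝ) * (fwdDiff 1)^[k] f y * (fwdDiff 1)^[K+1-k] g (y+k) := by
      intro k hk
      rw [mem_range] at hk
      rw [← Function.iterate_succ_apply]
      have : K - k + 1 = K + 1 - k := by omega
      rw [Nat.succ_eq_add_one, this]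
    have h2 : ∀ k ∈ range (K+1),
        (Nat.choose K k : ℝ) * (fwdDiff 1)^[k] (fwdDiff 1 f) y
            * (fwdDiff 1)^[K-k] (fun s => g (s+1)) (y+k)
        = (Nat.choose K k : ℝ) * (fwdDiff 1)^[k+1] f y * (fwdDiff 1)^[K-k] g (y+k+1) := by
      intro k hk
      rw [← Function.iterate_succ_apply, fd_shift]
    rw [Finset.sum_congr rfl h1, Finset.sum_congr rfl h2]
    conv_rhs => rw [Finset.sum_range_succ']
    conv_lhs => rw [Finset.sum_range_succ']
    simp only [Nat.succ_sub_succ_eq_sub, Nat.choose_succ_succ, Nat.cast_add, add_mul,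
      Finset.sum_add_distrib, Nat.choose_zero_right, Nat.cast_one, one_mul,
      Function.iterate_zero, id_eq, add_zero, Nat.sub_zero, ← add_assoc]
    simp only [Nat.succ_eq_add_one]
    rw [Finset.sum_range_succ (fun k => (Nat.choose K (k+1) : ℝ) * (fwdDiff 1)^[k+1] f y
      * (fwdDiff 1)^[K-k] g (y+k+1)) K]
    simp only [Nat.choose_succ_self, Nat.cast_zero, zero_mul, add_zero]
    ring

lemma fd_const (c : ℝ) (k y : ℕ) (hk : 1 ≤ k) :
    (fwdDiff 1)^[k] (fun _ : ℕ => c) y = 0 := by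
  obtain ⟨k', rfl⟩ : ∃ k', k = k' + 1 := ⟨k - 1, by omega⟩
  rw [Function.iterate_succ_apply, fwdDiff_const]
  rw [fd_eval]
  simp

lemma fd_affine (b c : ℝ) (k y : ℕ) (hk : 2 ≤ k) :
    (fwdDiff 1)^[k] (fun s : ℕ => b * s + c) y = 0 := by
  obtain ⟨k', rfl⟩ : ∃ k', k = k' + 1 := ⟨k - 1, by omega⟩
  rw [Function.iterate_succ_apply]
  have : fwdDiff 1 (fun s : ℕ => b * s + c) = fun _ : ℕ => b := by
    funext s
    simp only [fwdDiff]
    push_cast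
    ring
  rw [this, fd_const _ _ _ (by omega)]

lemma fd_prod_zero (b : ℝ) (c : ℕ → ℝ) (m : ℕ) : ∀ k y, m < k →
    (fwdDiff 1)^[k] (fun s : ℕ => ∏ j ∈ range m, (b * s + c j)) y = 0 := by
  induction m with
  | zero =>
    intro k y hk
    simpa using fd_const 1 k y hk
  | succ m IH =>
    intro k y hk
    have hf : (fun s : ℕ => ∏ j ∈ range (m+1), (b * s + c j))
        = fun s : ℕ => (∏ j ∈ range m, (b * s + c j)) * (b * s + c m) := by
      funext s
      rw [prod_range_succ]
    rw [hf, fd_mul]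
    refine Finset.sum_eq_zero fun i hi => ?_
    rw [mem_range] at hi
    rcases lt_or_ge m i with h | h
    · rw [IH i y h]
      ring
    · rw [fd_affine _ _ _ _ (by omega)]
      ring

lemma tri (N : ℕ) (f : ℕ → ℕ → ℝ) :
    ∑ K ∈ range (N+1), ∑ k ∈ range (K+1), f k (K-k)
      = ∑ k ∈ range (N+1), ∑ i ∈ range (N+1-k), f k i := by
  induction N with
  | zero => simp
  | succ N IH =>
    rw [Finset.sum_range_succ, IH]
    conv_rhs => rw [Finset.sum_range_succ]
    have h1 : ∀ k ∈ range (N+1), ∑ i ∈ range (N+1+1-k), f k i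
        = ∑ i ∈ range (N+1-k), f k i + f k (N+1-k) := by
      intro k hk
      rw [mem_range] at hk
      have : N+1+1-k = (N+1-k)+1 := by omega
      rw [this, Finset.sum_range_succ]
    rw [Finset.sum_congr rfl h1, Finset.sum_add_distrib]
    have h2 : ∑ k ∈ range (N+1+1), f k (N+1-k)
        = ∑ k ∈ range (N+1), f k (N+1-k) + f (N+1) 0 := by
      rw [Finset.sum_range_succ]
      congr 2
      omega
    rw [h2]
    have : N+1+1-(N+1) = 1 := by omega
    rw [this]
    simp only [Finset.sum_range_one]
    ring

lemma choose_id (L k i : ℕ) :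
    ((Nat.choose (k+i+L) (k+i)) : ℝ) * (Nat.choose (k+i) k)
      = ((Nat.choose (k+L) k) : ℝ) * (Nat.choose (i+L+k) i) := by
  rw [Nat.cast_choose ℝ (by omega : k+i ≤ k+i+L), Nat.cast_choose ℝ (by omega : k ≤ k+i),
    Nat.cast_choose ℝ (by omega : k ≤ k+L), Nat.cast_choose ℝ (by omega : i ≤ i+L+k)]
  have e1 : k+i+L-(k+i) = L := by omega
  have e2 : k+i-k = i := by omega
  have e3 : k+L-k = L := by omega
  have e4 : i+L+k-i = L+k := by omega
  rw [e1, e2, e3, e4]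
  have e5 : i+L+k = k+i+L := by omega
  rw [e5]
  have h1 : ((Nat.factorial (k+i)) : ℝ) ≠ 0 := Nat.cast_ne_zero.mpr (Nat.factorial_ne_zero _)
  have h2 : ((Nat.factorial L) : ℝ) ≠ 0 := Nat.cast_ne_zero.mpr (Nat.factorial_ne_zero _)
  have h3 : ((Nat.factorial k) : ℝ) ≠ 0 := Nat.cast_ne_zero.mpr (Nat.factorial_ne_zero _)
  have h4 : ((Nat.factorial i) : ℝ) ≠ 0 := Nat.cast_ne_zero.mpr (Nat.factorial_ne_zero _)
  have h5 : ((Nat.factorial (L+k)) : ℝ) ≠ 0 := Nat.cast_ne_zero.mpr (Nat.factorial_ne_zero _)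
  field_simp
  ring

lemma HS_eq (α β γ : ℝ) (N k : ℕ) :
    HS N k α (-β) (-γ) = (-1:ℝ)^N / ((-β)^k * (Nat.factorial k : ℝ)) *
      (fwdDiff 1)^[k] (fun s : ℕ => ∏ j ∈ range N, (β * s + γ + j * α)) 0 := by
  have hg : ∀ s : ℕ, gfact (-β * s + -γ) α N
      = (-1:ℝ)^N * ∏ j ∈ range N, (β * s + γ + j * α) := by
    intro s
    unfold gfact
    calc ∏ j ∈ range N, (-β * (s:ℝ) + -γ - j * α)
        = ∏ j ∈ range N, (-1) * (β * s + γ + j * α) :=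
          Finset.prod_congr rfl fun j _ => by ring
      _ = (-1:ℝ)^N * ∏ j ∈ range N, (β * s + γ + j * α) := by
          rw [Finset.prod_mul_distrib, Finset.prod_const, Finset.card_range]
  unfold HS
  rw [fd_eval]
  simp only [zero_add]
  have : ∑ s ∈ range (k+1), (-1:ℝ)^(k-s) * (Nat.choose k s) * gfact (-β * s + -γ) α N
      = (-1:ℝ)^N * ∑ s ∈ range (k+1), (-1:ℝ)^(k-s) * (Nat.choose k s)
          * ∏ j ∈ range N, (β * s + γ + j * α) := by
    rw [Finset.mul_sum]
    exact Finset.sum_congr rfl fun s _ => by rw [hg s]; ring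
  rw [this]
  ring

lemma A_eq (α β γ x : ℝ) (hβ : β ≠ 0) (lam N : ℕ) :
    A lam x N α β γ = ∑ k ∈ range (N+1), ((Nat.choose (k + lam - 1) k : ℝ)) * x ^ k *
      (fwdDiff 1)^[k] (fun s : ℕ => ∏ j ∈ range N, (β * s + γ + j * α)) 0 := by
  unfold A
  refine Finset.sum_congr rfl fun k _ => ?_
  rw [HS_eq]
  have h1 : ((-β)^k : ℝ) = (-1)^k * β^k := by rw [neg_pow]
  have h2 : ((-1:ℝ))^(N+k) = (-1)^N * (-1)^k := pow_add _ _ _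
  have hfac : ((Nat.factorial k : ℝ)) ≠ 0 := Nat.cast_ne_zero.mpr (Nat.factorial_ne_zero _)
  have hβk : (β:ℝ)^k ≠ 0 := pow_ne_zero _ hβ
  have hm1 : ((-1:ℝ))^k ≠ 0 := pow_ne_zero _ (by norm_num)
  have hm2 : ((-1:ℝ))^N ≠ 0 := pow_ne_zero _ (by norm_num)
  rw [h1, h2]
  have hsq : ((-1:ℝ))^(N*2) = 1 := by
    rw [mul_comm, pow_mul]
    norm_num
  field_simp
  ring_nf
  rw [hsq, mul_one]
  have e : (fun s : ℕ => ∏ j ∈ range N, (β * s + γ + α * j))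
      = (fun s : ℕ => ∏ j ∈ range N, (β * s + γ + j * α)) := by
    funext s; exact Finset.prod_congr rfl fun j _ => by ring
  rw [e]; ring

theorem stmt12 (α β r x : ℝ) (hβ : β ≠ 0) (hx : x ≠ 0) (lam : ℕ) (hlam : 1 ≤ lam) (m n : ℕ) :
    (-1 : ℝ) ^ m * A lam x (n + m) α β r =
      ∑ k ∈ Finset.range (m + 1),
        HS m k α (-β) (-r) * (Nat.choose (k + lam - 1) k : ℝ) * (Nat.factorial k : ℝ) *
          (-β * x) ^ k * A (lam + k) x n α β (r + m * α + k * β) := by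
  obtain ⟨L, rfl⟩ : ∃ L, lam = L + 1 := ⟨lam - 1, by omega⟩
  set P : ℕ → ℝ := fun s : ℕ => ∏ j ∈ range m, (β * s + r + j * α) with hP
  set Rf : ℕ → ℝ := fun s : ℕ => ∏ j ∈ range n, (β * s + (r + m * α) + j * α) with hRf
  have hPvan : ∀ k y, m < k → (fwdDiff 1)^[k] P y = 0 := by
    intro k y hk
    have hPe : P = fun s : ℕ => ∏ j ∈ range m, (β * s + (r + j * α)) := by
      funext s
      exact Finset.prod_congr rfl fun j _ => by ring
    rw [hPe]
    exact fd_prod_zero β (fun j => r + j * α) m k y hk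
  have hRvan : ∀ k y, n < k → (fwdDiff 1)^[k] Rf y = 0 := by
    intro k y hk
    have hRe : Rf = fun s : ℕ => ∏ j ∈ range n, (β * s + ((r + m * α) + j * α)) := by
      funext s
      exact Finset.prod_congr rfl fun j _ => by ring
    rw [hRe]
    exact fd_prod_zero β (fun j => (r + m * α) + j * α) n k y hk
  set T : ℕ → ℕ → ℝ := fun k i =>
    ((Nat.choose (k+i+L) (k+i)) : ℝ) * (Nat.choose (k+i) k) * x ^ (k+i)
      * (fwdDiff 1)^[k] P 0 * (fwdDiff 1)^[i] Rf k with hT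
  -- LHS
  rw [A_eq α β r x hβ (L+1) (n+m)]
  have hsplitfun : (fun s : ℕ => ∏ j ∈ range (n+m), (β * s + r + j * α))
      = fun s => P s * Rf s := by
    funext s
    rw [hP, hRf]
    simp only []
    rw [show n + m = m + n by omega, Finset.prod_range_add]
    congr 1
    refine Finset.prod_congr rfl fun j _ => ?_
    push_cast
    ring
  rw [hsplitfun]
  have hL1 : ∀ K ∈ range (n+m+1),
      ((Nat.choose (K + (L+1) - 1) K : ℝ)) * x ^ K
          * (fwdDiff 1)^[K] (fun s => P s * Rf s) 0
        = ∑ k ∈ range (K+1), T k (K - k) := by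
    intro K hK
    rw [mem_range] at hK
    rw [fd_mul, Finset.mul_sum]
    refine Finset.sum_congr rfl fun k hk => ?_
    rw [mem_range] at hk
    rw [hT]
    simp only []
    have h1 : k + (K - k) = K := by omega
    rw [h1]
    simp only [zero_add]
    have h2 : K + (L+1) - 1 = K + L := by omega
    rw [h2]
    ring
  rw [Finset.sum_congr rfl hL1, tri]
  have hL3 : ∑ k ∈ range (n+m+1), ∑ i ∈ range (n+m+1-k), T k i
      = ∑ k ∈ range (m+1), ∑ i ∈ range (n+1), T k i := by
    rw [← Finset.sum_subset (show range (m+1) ⊆ range (n+m+1) by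
        intro a ha; rw [mem_range] at *; omega)
      (fun k _ hnk => ?_)]
    · refine Finset.sum_congr rfl fun k hk => ?_
      rw [mem_range] at hk
      rw [← Finset.sum_subset (show range (n+1) ⊆ range (n+m+1-k) by
          intro a ha; rw [mem_range] at *; omega)
        (fun i _ hni => ?_)]
      have hn : n < i := by
        by_contra hc
        exact hni (mem_range.mpr (by omega))
      rw [hT]
      simp only []
      rw [hRvan i k hn]
      ring
    · have hm : m < k := by
        by_contra hc
        exact hnk (mem_range.mpr (by omega))
      refine Finset.sum_eq_zero fun i _ => ?_
      rw [hT]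
      simp only []
      rw [hPvan k 0 hm]
      ring
  rw [hL3, Finset.mul_sum]
  -- RHS
  refine Finset.sum_congr rfl fun k hk => ?_
  rw [mem_range] at hk
  rw [HS_eq α β r m k, A_eq α β (r + m * α + k * β) x hβ (L+1+k) n]
  rw [← hP]
  have hshift : (fun s : ℕ => ∏ j ∈ range n, (β * s + (r + m * α + k * β) + j * α))
      = fun s : ℕ => Rf (s + k) := by
    funext s
    rw [hRf]
    simp only []
    refine Finset.prod_congr rfl fun j _ => ?_
    push_cast
    ring
  rw [hshift]
  have hinner : ∀ i ∈ range (n+1),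
      ((Nat.choose (i + (L+1+k) - 1) i : ℝ)) * x ^ i
          * (fwdDiff 1)^[i] (fun s : ℕ => Rf (s + k)) 0
        = ((Nat.choose (i+L+k) i : ℝ)) * x ^ i * (fwdDiff 1)^[i] Rf k := by
    intro i _
    rw [fd_shift, zero_add]
    have : i + (L+1+k) - 1 = i+L+k := by omega
    rw [this]
  rw [Finset.sum_congr rfl hinner]
  rw [Finset.mul_sum, Finset.mul_sum]
  refine Finset.sum_congr rfl fun i _ => ?_
  rw [hT]
  simp only []
  rw [choose_id L k i]
  have h2 : k + (L+1) - 1 = k + L := by omega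
  rw [h2]
  have hβk : ((-β)^k : ℝ) ≠ 0 := pow_ne_zero _ (neg_ne_zero.mpr hβ)
  have hfac : ((Nat.factorial k : ℝ)) ≠ 0 := Nat.cast_ne_zero.mpr (Nat.factorial_ne_zero _)
  have hmx : ((-β*x)^k : ℝ) = (-β)^k * x^k := mul_pow _ _ _
  rw [hmx, pow_add]
  field_simp
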